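/- Let T : X → X satisfy ‖Tx − Ty‖ ≤ a · ‖x − Tx‖^α · ‖y − Ty‖^(1−α) for all x, y ∈ X, where a ∈ [0,1) and α ∈ (0,1). Then the Picard iteration x_{n+1} = T x_n satisfies ‖x_{n+1} − x_n‖ ≤ a^n ‖x_1 − x_0‖ for all n ≥ 0. -/

import Mathlib

theorem picard_iterates_geometric_bound
    {E : Type*} [NormedAddCommGroup E] [NormedSpace ℝ E]
    (T : E → E) (a α : ℝ) (ha0 : 0 ≤ a) (ha1 : a < 1)
    (hα0 : 0 < α) (hα1 : α < 1)
    (hT : ∀ x y : E, ‖T x - T y‖ ≤ a * ‖x - T x‖ ^ α * ‖y - T y‖ ^ (1 - α))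
    (x : ℕ → E) (hx : ∀ n, x (n + 1) = T (x n)) :
    ∀ n : ℕ, ‖x (n + 1) - x n‖ ≤ a ^ n * ‖x 1 - x 0‖ := by
  set d : ℕ → ℝ := fun n => ‖x (n + 1) - x n‖ with hd
  have hdnn : ∀ n, 0 ≤ d n := fun n => norm_nonneg _
  have h1α : 0 < 1 - α := by linarith
  have key : ∀ n, d (n + 1) ≤ a * d n := by
    intro n
    have h := hT (x (n + 1)) (x n)
    rw [← hx (n + 1), ← hx n] at h
    have e1 : ‖x (n + 1) - x (n + 2)‖ = d (n + 1) := norm_sub_rev _ _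
    have e2 : ‖x n - x (n + 1)‖ = d n := norm_sub_rev _ _
    rw [e1, e2] at h
    have h' : d (n + 1) ≤ a * d (n + 1) ^ α * d n ^ (1 - α) := h
    rcases eq_or_lt_of_le (hdnn (n + 1)) with h0 | h0
    · rw [← h0]; positivity
    rcases eq_or_lt_of_le ha0 with ha | ha
    · exfalso
      rw [← ha] at h'
      simp at h'
      linarith
    -- divide by d(n+1)^α
    have hsplit : d (n + 1) = d (n + 1) ^ α * d (n + 1) ^ (1 - α) := by
      rw [← Real.rpow_add h0]; simp
    have hpos : (0 : ℝ) < d (n + 1) ^ α := Real.rpow_pos_of_pos h0 _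
    have h2 : d (n + 1) ^ (1 - α) ≤ a * d n ^ (1 - α) := by
      rw [hsplit] at h'
      have := (mul_le_mul_iff_right₀ hpos).mp (by linarith [h'] :
        d (n + 1) ^ α * d (n + 1) ^ (1 - α) ≤ d (n + 1) ^ α * (a * d n ^ (1 - α)))
      exact this
    -- raise to power 1/(1-α)
    have h3 : (d (n + 1) ^ (1 - α)) ^ (1 / (1 - α)) ≤ (a * d n ^ (1 - α)) ^ (1 / (1 - α)) := by
      apply Real.rpow_le_rpow (by positivity) h2 (by positivity)
    rw [← Real.rpow_mul (hdnn _), mul_one_div_cancel (ne_of_gt h1α), Real.rpow_one] at h3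
    rw [Real.mul_rpow ha0 (by positivity), ← Real.rpow_mul (hdnn n),
      mul_one_div_cancel (ne_of_gt h1α), Real.rpow_one] at h3
    calc d (n + 1) ≤ a ^ (1 / (1 - α)) * d n := by
          exact h3
      _ ≤ a * d n := by
          apply mul_le_mul_of_nonneg_right _ (hdnn n)
          calc a ^ (1 / (1 - α)) ≤ a ^ (1 : ℝ) := by
                apply Real.rpow_le_rpow_of_exponent_ge ha ha1.le
                rw [le_div_iff₀ h1α]; nlinarith
            _ = a := Real.rpow_one a
  intro n
  induction n with
  | zero => simp
  | succ k ih =>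
    calc d (k + 1) ≤ a * d k := key k
      _ ≤ a * (a ^ k * d 0) := by
          apply mul_le_mul_of_nonneg_left ih ha0
      _ = a ^ (k + 1) * d 0 := by ring
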